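/- Define polynomials ρ_{k,r} ∈ ℂ[ω,β] for k ≥ 0 and r an odd integer by the formal power series expansion Σ_{k≥0} ρ_{k,r} t^k = (1+βt²)^{−3/4}·((1−t√(−β))/(1+t√(−β)))^{ω/(2√(−β))}·(√(1−t√(−β)) + √(1+t√(−β)))·(1+√(1+βt²))^{(r−1)/2}. Then the specialization at β = 0 satisfies ρ_{k,r}|_{β=0} = (−1)^k · 2^{(r+1)/2}/k! · ω^k; in particular ρ_{k,r} ≠ 0 for all k ≥ 0. -/

import Mathlib

/-!
STATEMENT 7: The polynomials `ρ_{k,r} ∈ ℂ[ω,β]` (k ≥ 0, r odd) are defined by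
`Σ_k ρ_{k,r} t^k = (1+βt²)^{−3/4} · ((1−t√(−β))/(1+t√(−β)))^{ω/(2√(−β))}
                   · (√(1−t√(−β)) + √(1+t√(−β))) · (1+√(1+βt²))^{(r−1)/2}`.
We encode the factors by the unique power series over `ℂ[ω,β]` satisfying their
defining algebraic/differential equations (with `h = √(1+βt²)`):
* `h² = 1+βt²`, `h(0) = 1`;
* `A = (1+βt²)^{−3/4}`          : `2(1+βt²)A' = −3βt·A`, `A(0)=1`;
* `B = ((1−t√(−β))/(1+t√(−β)))^{ω/(2√(−β))}` : `(1+βt²)B' = −ω·B`, `B(0)=1`;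
* `Cc = √(1−t√(−β)) + √(1+t√(−β))` : `Cc² = 2+2h`, `Cc(0)=2`;
* `D = (1+√(1+βt²))^{(r−1)/2}`  : `2h(1+h)D' = (r−1)βt·D`, `D(0)=2^{(r−1)/2}`;
and `G = A·B·Cc·D`, so `ρ_{k,r} = coeff k G`.  The claim: the specialization at
`β = 0` satisfies `ρ_{k,r}|_{β=0} = (−1)^k · 2^{(r+1)/2}/k! · ω^k`; in particular
`ρ_{k,r} ≠ 0` for all `k ≥ 0`.  Here `ω = X 0`, `β = X 1` in `MvPolynomial (Fin 2) ℂ`.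
-/

open PowerSeries

noncomputable abbrev Stmt7.Pω : PowerSeries (MvPolynomial (Fin 2) ℂ) :=
  PowerSeries.C (MvPolynomial.X 0)

noncomputable abbrev Stmt7.Pβ : PowerSeries (MvPolynomial (Fin 2) ℂ) :=
  PowerSeries.C (MvPolynomial.X 1)

noncomputable def Stmt7.φ : MvPolynomial (Fin 2) ℂ →+* MvPolynomial ℕ ℂ :=
  (MvPolynomial.aeval ![MvPolynomial.X 0, 0]).toRingHom

namespace Stmt7

lemma coeff_derivFun' {R : Type*} [CommSemiring R] (f : PowerSeries R) (n : ℕ) :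
    PowerSeries.coeff n f.derivativeFun = PowerSeries.coeff (n + 1) f * (n + 1) :=
  PowerSeries.coeff_derivative f n

lemma φX0 : φ (MvPolynomial.X 0) = MvPolynomial.X 0 := by simp [φ]
lemma φX1 : φ (MvPolynomial.X 1) = 0 := by simp [φ]
lemma φC (z : ℂ) : φ (MvPolynomial.C z) = MvPolynomial.C z := by
  simp [φ, MvPolynomial.aeval_C, MvPolynomial.algebraMap_eq]

lemma ps_ofNat_ne_zero (n : ℕ) [n.AtLeastTwo] :
    (OfNat.ofNat n : PowerSeries (MvPolynomial ℕ ℂ)) ≠ 0 := by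
  intro hc
  have h1 := congrArg (PowerSeries.constantCoeff) hc
  rw [map_ofNat, map_zero] at h1
  have h2 := congrArg MvPolynomial.constantCoeff h1
  rw [map_ofNat, map_zero] at h2
  norm_num at h2

lemma map_derivativeFun (f : PowerSeries (MvPolynomial (Fin 2) ℂ)) :
    (PowerSeries.map φ f).derivativeFun = PowerSeries.map φ f.derivativeFun := by
  ext n : 1
  simp [coeff_derivFun', PowerSeries.coeff_map]

lemma eq_C_of_deriv_zero (f : PowerSeries (MvPolynomial ℕ ℂ))
    (hf : f.derivativeFun = 0) :
    f = PowerSeries.C (PowerSeries.constantCoeff f) := by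
  ext n
  cases n with
  | zero => simp
  | succ n =>
    have h1 := congrArg (PowerSeries.coeff n) hf
    rw [coeff_derivFun'] at h1
    simp only [map_zero] at h1
    have hne : (((n : ℕ) : MvPolynomial ℕ ℂ) + 1) ≠ 0 := Nat.cast_add_one_ne_zero n
    rcases mul_eq_zero.mp h1 with h | h
    · simp [PowerSeries.coeff_C, h]
    · exact absurd h hne

lemma sq_eq_sq_const (f : PowerSeries (MvPolynomial ℕ ℂ)) (a : MvPolynomial ℕ ℂ)
    (hf : f ^ 2 = PowerSeries.C (a ^ 2))
    (h0 : PowerSeries.constantCoeff f = a) (ha : a + a ≠ 0) :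
    f = PowerSeries.C a := by
  have hz : (f - PowerSeries.C a) * (f + PowerSeries.C a) = 0 := by
    have : (f - PowerSeries.C a) * (f + PowerSeries.C a)
        = f ^ 2 - (PowerSeries.C a) ^ 2 := by ring
    rw [this, hf, ← map_pow, sub_self]
  rcases mul_eq_zero.mp hz with h | h
  · linear_combination h
  · exfalso
    have := congrArg PowerSeries.constantCoeff h
    simp [h0] at this
    exact ha (by simp [this])

lemma coeffB (b : PowerSeries (MvPolynomial ℕ ℂ))
    (hb0 : PowerSeries.constantCoeff b = 1)
    (hb : b.derivativeFun = -(PowerSeries.C (MvPolynomial.X 0)) * b) :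
    ∀ k : ℕ, PowerSeries.coeff k b
      = MvPolynomial.C ((-1 : ℂ) ^ k / (k.factorial : ℂ)) * MvPolynomial.X 0 ^ k := by
  intro k
  induction k with
  | zero => simpa using hb0
  | succ n ih =>
    have h1 := congrArg (PowerSeries.coeff n) hb
    rw [coeff_derivFun', neg_mul, map_neg, PowerSeries.coeff_C_mul, ih] at h1
    have hne : (((n : ℕ) : MvPolynomial ℕ ℂ) + 1) ≠ 0 := Nat.cast_add_one_ne_zero n
    apply mul_right_cancel₀ hne
    rw [h1]
    have hcast : MvPolynomial.C ((((n : ℕ) : ℂ)) + 1)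
        = (((n : ℕ) : MvPolynomial ℕ ℂ) + 1) := by rw [map_add, map_one, map_natCast]
    have hc : ((-1 : ℂ)) ^ (n+1) / ((n+1).factorial : ℂ) * (((n:ℕ):ℂ) + 1)
        = -((-1 : ℂ) ^ n / (n.factorial : ℂ)) := by
      have h2 : ((n.factorial : ℂ)) ≠ 0 := Nat.cast_ne_zero.mpr n.factorial_ne_zero
      have h1' : ((n : ℂ) + 1) ≠ 0 := Nat.cast_add_one_ne_zero n
      rw [Nat.factorial_succ]
      push_cast
      field_simp
      ring
    rw [← hcast, mul_right_comm, ← map_mul, hc, map_neg, pow_succ]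
    ring

end Stmt7

open Stmt7 in
theorem stmt7 (r : ℤ) (hr : Odd r)
    (h A B Cc D G : PowerSeries (MvPolynomial (Fin 2) ℂ))
    (hh2 : h ^ 2 = 1 + Pβ * X ^ 2)
    (hh0 : constantCoeff h = 1)
    (hA0 : constantCoeff A = 1)
    (hA : 2 * (1 + Pβ * X ^ 2) * A.derivativeFun = -3 * (Pβ * X * A))
    (hB0 : constantCoeff B = 1)
    (hB : (1 + Pβ * X ^ 2) * B.derivativeFun = -Pω * B)
    (hC2 : Cc ^ 2 = 2 + 2 * h)
    (hC0 : constantCoeff Cc = 2)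
    (hD0 : constantCoeff D = MvPolynomial.C ((2 : ℂ) ^ ((r - 1) / 2)))
    (hD : 2 * (h * (1 + h)) * D.derivativeFun
        = PowerSeries.C (MvPolynomial.C ((r : ℂ) - 1)) * (Pβ * X * D))
    (hG : G = A * B * Cc * D) :
    ∀ k : ℕ,
      MvPolynomial.aeval ![MvPolynomial.X 0, 0] (PowerSeries.coeff k G)
        = MvPolynomial.C ((-1) ^ k * (2 : ℂ) ^ ((r + 1) / 2) / (k.factorial : ℂ))
            * MvPolynomial.X 0 ^ k
      ∧ PowerSeries.coeff k G ≠ 0 := by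
  have hmapβ : PowerSeries.map φ Pβ = 0 := by
    rw [Stmt7.Pβ, PowerSeries.map_C, φX1, map_zero]
  have hmapω : PowerSeries.map φ Pω = PowerSeries.C (MvPolynomial.X 0) := by
    rw [Stmt7.Pω, PowerSeries.map_C, φX0]
  have hone : PowerSeries.map φ (1 + Pβ * X ^ 2) = 1 := by
    rw [map_add, map_mul, map_one, hmapβ, zero_mul, add_zero]
  have hcc : ∀ f : PowerSeries (MvPolynomial (Fin 2) ℂ),
      PowerSeries.constantCoeff (PowerSeries.map φ f)
        = φ (PowerSeries.constantCoeff f) := by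
    intro f
    rw [← PowerSeries.coeff_zero_eq_constantCoeff, PowerSeries.coeff_map,
      PowerSeries.coeff_zero_eq_constantCoeff]
  -- h specializes to 1
  have hh' : PowerSeries.map φ h = 1 := by
    have h2 : (PowerSeries.map φ h) ^ 2
        = PowerSeries.C ((1 : MvPolynomial ℕ ℂ) ^ 2) := by
      rw [← map_pow, hh2, hone, one_pow, map_one]
    have h0 : PowerSeries.constantCoeff (PowerSeries.map φ h) = 1 := by
      rw [hcc, hh0, map_one]
    have := sq_eq_sq_const _ 1 h2 h0 (by norm_num)
    simpa using this
  -- A specializes to 1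
  have hA' : PowerSeries.map φ A = 1 := by
    have h1 := congrArg (PowerSeries.map φ) hA
    simp only [map_mul, map_neg, map_ofNat, hone, hmapβ, zero_mul, mul_zero, mul_one,
      neg_zero, ← map_derivativeFun] at h1
    have h2 : (2 : PowerSeries (MvPolynomial ℕ ℂ)) ≠ 0 := ps_ofNat_ne_zero 2
    have hd : (PowerSeries.map φ A).derivativeFun = 0 :=
      (mul_eq_zero.mp h1).resolve_left h2
    rw [eq_C_of_deriv_zero _ hd, hcc, hA0, map_one, map_one]
  -- B specializes to exp(-ωt)
  have hB' := congrArg (PowerSeries.map φ) hB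
  rw [map_mul, hone, one_mul, ← map_derivativeFun, map_mul, map_neg, hmapω] at hB'
  have hb := coeffB (PowerSeries.map φ B) (by rw [hcc, hB0, map_one]) hB'
  -- Cc specializes to 2
  have hC' : PowerSeries.map φ Cc = 2 := by
    have h2 : (PowerSeries.map φ Cc) ^ 2
        = PowerSeries.C ((2 : MvPolynomial ℕ ℂ) ^ 2) := by
      rw [← map_pow, hC2]
      simp only [map_add, map_mul, map_ofNat, map_pow, hh', mul_one]
      norm_num
    have h0 : PowerSeries.constantCoeff (PowerSeries.map φ Cc) = 2 := by
      rw [hcc, hC0, map_ofNat]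
    have := sq_eq_sq_const _ 2 h2 h0 (by norm_num)
    rw [this, map_ofNat]
  -- D specializes to a constant
  have hD' : PowerSeries.map φ D
      = PowerSeries.C (MvPolynomial.C ((2 : ℂ) ^ ((r - 1) / 2))) := by
    have h1 := congrArg (PowerSeries.map φ) hD
    simp only [map_mul, map_add, map_one, map_ofNat, hh', hmapβ, zero_mul, mul_zero,
      PowerSeries.map_C, ← map_derivativeFun] at h1
    have h4 : (4 : PowerSeries (MvPolynomial ℕ ℂ))
        * (PowerSeries.map φ D).derivativeFun = 0 := by
      linear_combination h1
    have h4ne : (4 : PowerSeries (MvPolynomial ℕ ℂ)) ≠ 0 := ps_ofNat_ne_zero 4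
    have hd : (PowerSeries.map φ D).derivativeFun = 0 :=
      (mul_eq_zero.mp h4).resolve_left h4ne
    rw [eq_C_of_deriv_zero _ hd, hcc, hD0, φC]
  -- powers of two
  obtain ⟨m, hm⟩ := hr
  have e1 : (r - 1) / 2 = m := by omega
  have e2 : (r + 1) / 2 = m + 1 := by omega
  have e3 : (2 : ℂ) * (2 : ℂ) ^ ((r - 1) / 2) = (2 : ℂ) ^ ((r + 1) / 2) := by
    rw [e1, e2, zpow_add_one₀ two_ne_zero]
    ring
  intro k
  have hcoeff : φ (PowerSeries.coeff k G)
      = MvPolynomial.C ((-1) ^ k * (2 : ℂ) ^ ((r + 1) / 2) / (k.factorial : ℂ))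
          * MvPolynomial.X 0 ^ k := by
    have hmapG : PowerSeries.map φ G
        = PowerSeries.C (MvPolynomial.C ((2 : ℂ) * (2 : ℂ) ^ ((r - 1) / 2)))
            * PowerSeries.map φ B := by
      rw [hG, map_mul, map_mul, map_mul, hA', hC', hD', one_mul]
      rw [show (2 : PowerSeries (MvPolynomial ℕ ℂ))
            = PowerSeries.C (MvPolynomial.C (2 : ℂ)) from by rw [map_ofNat, map_ofNat]]
      rw [map_mul (MvPolynomial.C), map_mul PowerSeries.C]
      ring
    rw [← PowerSeries.coeff_map, hmapG, PowerSeries.coeff_C_mul, hb k, ← mul_assoc,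
      ← map_mul]
    congr 2
    rw [← e3]
    ring
  have hbridge : MvPolynomial.aeval ![MvPolynomial.X 0, 0]
      (PowerSeries.coeff k G) = φ (PowerSeries.coeff k G) := rfl
  refine ⟨hbridge.trans hcoeff, ?_⟩
  intro hzero
  rw [hzero, map_zero] at hcoeff
  have hc0 : ((-1 : ℂ)) ^ k * (2 : ℂ) ^ ((r + 1) / 2) / (k.factorial : ℂ) ≠ 0 := by
    apply div_ne_zero
    · exact mul_ne_zero (pow_ne_zero _ (by norm_num)) (zpow_ne_zero _ two_ne_zero)
    · exact_mod_cast k.factorial_ne_zero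
  have hX : (MvPolynomial.X 0 : MvPolynomial ℕ ℂ) ^ k ≠ 0 :=
    pow_ne_zero _ (MvPolynomial.X_ne_zero 0)
  have hCne : (MvPolynomial.C ((-1) ^ k * (2 : ℂ) ^ ((r + 1) / 2) / (k.factorial : ℂ))
      : MvPolynomial ℕ ℂ) ≠ 0 := by
    simpa using hc0
  exact mul_ne_zero hCne hX hcoeff.symm
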